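/- Let E ⊆ Λ be rings where E is a field and Λ = ∏_{l ∈ ℤ/d'} Λ_l is a finite product of fields, with #E > d'. Let 1 ≤ m ≤ s and D ∈ Mat_{s×m}(Λ) such that D can be completed to an invertible matrix D₀ = [*, D] ∈ GL_s(Λ). Then there exist A ∈ GL_m(Λ) and B ∈ GL_s(E) such that B·D·A has the form whose top m×m block is the identity matrix I_m (and arbitrary entries below). -/

import Mathlib

/-!
STATEMENT 16: Let E ⊆ Λ be rings where E is a field and Λ = ∏_{l ∈ ℤ/d'} Λ_l is a finite
product of fields, with #E > d'.  Let 1 ≤ m ≤ s and D ∈ Mat_{s×m}(Λ) such that D can be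
completed to an invertible matrix D₀ = [*, D] ∈ GL_s(Λ).  Then there exist A ∈ GL_m(Λ) and
B ∈ GL_s(E) such that B·D·A has identity top m×m block.
-/

open Submodule Module

/-- Units in a product of monoids, from componentwise units. -/
lemma aux_isUnit_pi {ι : Type*} {F : ι → Type*} [∀ i, Monoid (F i)] {f : ∀ i, F i}
    (h : ∀ i, IsUnit (f i)) : IsUnit f := by
  choose u hu using h
  refine ⟨⟨f, fun i => ↑(u i)⁻¹, funext fun i => ?_, funext fun i => ?_⟩, rfl⟩
  · show f i * ↑(u i)⁻¹ = 1
    rw [← hu i]; exact (u i).mul_inv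
  · show ↑(u i)⁻¹ * f i = 1
    rw [← hu i]; exact (u i).inv_mul

/-- A vector space over a field `K` with more than `n` elements is not the union of `n`
proper subspaces. -/
lemma aux_avoid_fin {K V : Type*} [Field K] [AddCommGroup V] [Module K V] :
    ∀ (n : ℕ) (W : Fin n → Submodule K V), ((n : Cardinal) < Cardinal.mk K) →
      (∀ i, W i ≠ ⊤) → ∃ v : V, ∀ i, v ∉ W i := by
  intro n
  induction n with
  | zero => exact fun W _ _ => ⟨0, fun i => i.elim0⟩
  | succ n ih =>
    intro W hcard hW
    have hstep : ((n : Cardinal) < Cardinal.mk K) := by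
      refine lt_trans ?_ hcard
      exact_mod_cast Nat.lt_succ_self n
    obtain ⟨v, hv⟩ := ih (fun i => W i.castSucc) hstep (fun i => hW _)
    obtain ⟨u, hu⟩ : ∃ u, u ∉ W (Fin.last n) := by
      by_contra h; push_neg at h
      exact hW (Fin.last n) (Submodule.eq_top_iff'.2 h)
    by_contra hcon
    push_neg at hcon
    have hall : ∀ t : K, ∃ i, u + t • v ∈ W i := fun t => hcon (u + t • v)
    choose f hf using hall
    have hinj : Function.Injective f := by
      intro t t' h
      by_contra hne
      have hmem : u + t • v ∈ W (f t) := hf t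
      have hmem' : u + t' • v ∈ W (f t) := h ▸ hf t'
      have hsub : (t - t') • v ∈ W (f t) := by
        have := Submodule.sub_mem _ hmem hmem'
        simpa [sub_smul, add_sub_add_left_eq_sub] using this
      have hvW : v ∈ W (f t) := by
        have h0 : (t - t') ≠ 0 := sub_ne_zero.2 hne
        have := Submodule.smul_mem _ (t - t')⁻¹ hsub
        simpa [smul_smul, inv_mul_cancel₀ h0] using this
      rcases Fin.eq_castSucc_or_eq_last (f t) with ⟨j, hj⟩ | hj
      · exact hv j (hj ▸ hvW)
      · have huW : u ∈ W (Fin.last n) := by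
          have : (u + t • v) - t • v ∈ W (Fin.last n) :=
            Submodule.sub_mem _ (hj ▸ hmem) (Submodule.smul_mem _ t (hj ▸ hvW))
          simpa using this
        exact hu huW
    haveI : Fintype K := Fintype.ofInjective f hinj
    have h1 : Fintype.card K ≤ n + 1 := by
      simpa using Fintype.card_le_of_injective f hinj
    rw [Cardinal.mk_fintype K] at hcard
    have h2 : (n + 1 : ℕ) < Fintype.card K := by exact_mod_cast hcard
    omega

lemma aux_avoid {K V : Type*} [Field K] [AddCommGroup V] [Module K V] {ν : Type*} [Fintype ν]
    (W : ν → Submodule K V) (hcard : ((Fintype.card ν : ℕ) : Cardinal) < Cardinal.mk K)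
    (hW : ∀ l, W l ≠ ⊤) : ∃ v : V, ∀ l, v ∉ W l := by
  obtain ⟨v, hv⟩ := aux_avoid_fin (Fintype.card ν)
    (fun i => W ((Fintype.equivFin ν).symm i)) hcard (fun i => hW _)
  refine ⟨v, fun l => ?_⟩
  have := hv (Fintype.equivFin ν l)
  simpa using this

/-- Main inductive construction: a family of `k ≤ m` vectors over `K` whose images under
each `ψ l` are linearly independent over `F l`. -/
lemma aux_good_family {K : Type*} [Field K] {ν : Type*} [Fintype ν]
    {F : ν → Type*} [∀ l, Field (F l)] [∀ l, Algebra K (F l)]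
    (hcard : ((Fintype.card ν : ℕ) : Cardinal) < Cardinal.mk K)
    {s m : ℕ}
    (ψ : ∀ l, (Fin s → K) →ₗ[K] (Fin m → F l))
    (hsurj : ∀ l (y : Fin m → F l), ∃ w : Fin s → F l,
        ∑ c : Fin s, w c • ψ l (Pi.single c 1) = y) :
    ∀ k, k ≤ m → ∃ v : Fin k → (Fin s → K),
      ∀ l, LinearIndependent (F l) (fun i => ψ l (v i)) := by
  intro k
  induction k with
  | zero => exact fun _ => ⟨Fin.elim0, fun l => linearIndependent_empty_type⟩
  | succ k ih =>
    intro hk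
    obtain ⟨v, hv⟩ := ih (Nat.le_of_succ_le hk)
    set W : ν → Submodule K (Fin s → K) := fun l =>
      Submodule.comap (ψ l)
        ((Submodule.span (F l) (Set.range (fun i => ψ l (v i)))).restrictScalars K) with hWdef
    have hWproper : ∀ l, W l ≠ ⊤ := by
      intro l htop
      have hrow : ∀ c : Fin s,
          ψ l (Pi.single c 1) ∈ Submodule.span (F l) (Set.range fun i => ψ l (v i)) := by
        intro c
        have : Pi.single c 1 ∈ W l := htop ▸ Submodule.mem_top
        simpa [hWdef] using this
      have hspan : Submodule.span (F l) (Set.range fun i => ψ l (v i)) = ⊤ := by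
        rw [Submodule.eq_top_iff']
        intro y
        obtain ⟨w, hw⟩ := hsurj l y
        rw [← hw]
        exact Submodule.sum_mem _ (fun c _ => Submodule.smul_mem _ _ (hrow c))
      let b : Basis (Fin k) (F l) (Fin m → F l) := Basis.mk (hv l) (le_of_eq hspan.symm)
      have hb := Module.finrank_eq_card_basis b
      rw [Module.finrank_fin_fun, Fintype.card_fin] at hb
      omega
    obtain ⟨u, hu⟩ := aux_avoid W hcard hWproper
    refine ⟨Fin.snoc v u, fun l => ?_⟩
    have hsnoc : (fun i => ψ l ((Fin.snoc v u : Fin (k+1) → Fin s → K) i))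
        = Fin.snoc (fun i => ψ l (v i)) (ψ l u) := by
      funext i
      refine Fin.lastCases ?_ (fun j => ?_) i <;> simp
    rw [hsnoc, linearIndependent_fin_snoc]
    refine ⟨hv l, fun hmem => hu l ?_⟩
    simpa [hWdef] using hmem

theorem stmt16 (d' : ℕ) [NeZero d'] (Λl : ZMod d' → Type) [∀ l, Field (Λl l)]
    (E : Type) [Field E] (ι : E →+* (∀ l, Λl l)) (hι : Function.Injective ι)
    (hcard : (d' : Cardinal) < Cardinal.mk E)
    (s m : ℕ) (hm : 1 ≤ m) (hms : m ≤ s)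
    (D : Matrix (Fin s) (Fin m) (∀ l, Λl l))
    (hD : ∃ D₀ : Matrix (Fin s) (Fin s) (∀ l, Λl l), IsUnit D₀ ∧
      ∀ (i : Fin s) (j : Fin m),
        D₀ i (Fin.cast (by omega) (Fin.natAdd (s - m) j)) = D i j) :
    ∃ A : Matrix (Fin m) (Fin m) (∀ l, Λl l), IsUnit A ∧
      ∃ B : Matrix (Fin s) (Fin s) E, IsUnit B ∧
        ∀ (i j : Fin m),
          ((B.map ι) * D * A) (Fin.castLE hms i) j = if i = j then 1 else 0 := by
  classical
  obtain ⟨D₀, hD₀u, hD₀⟩ := hD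
  letI alg : ∀ l, Algebra E (Λl l) :=
    fun l => RingHom.toAlgebra ((Pi.evalRingHom Λl l).comp ι)
  have halgmap : ∀ l (c : E), algebraMap E (Λl l) c = ι c l := fun l c => rfl
  have hsm : s - m + m = s := by omega
  set emb : Fin m → Fin s := fun j => Fin.cast hsm (Fin.natAdd (s - m) j) with hembdef
  have hembinj : Function.Injective emb := by
    intro a b h
    have := congrArg Fin.val h
    simp [hembdef] at this
    exact Fin.ext this
  have hD₀emb : ∀ (i : Fin s) (j : Fin m), D₀ i (emb j) = D i j := fun i j => hD₀ i j
  -- the linear maps ψ l : u ↦ (ι∘u) ᵥ* D_l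
  set ψ : ∀ l, (Fin s → E) →ₗ[E] (Fin m → Λl l) := fun l =>
    { toFun := fun u j => ∑ t, ι (u t) l * D t j l
      map_add' := by
        intro a b; funext j
        simp [add_mul, Finset.sum_add_distrib]
      map_smul' := by
        intro c a; funext j
        simp only [Pi.smul_apply, smul_eq_mul, map_mul, RingHom.id_apply]
        rw [Algebra.smul_def, halgmap, Finset.mul_sum]
        exact Finset.sum_congr rfl fun t _ => by
          show (ι c * ι (a t)) l * D t j l = ι c l * (ι (a t) l * D t j l)
          rw [Pi.mul_apply]; ring } with hψdef
  have hψapp : ∀ l (u : Fin s → E) (j : Fin m), ψ l u j = ∑ t, ι (u t) l * D t j l :=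
    fun l u j => rfl
  -- component matrices of D₀ are invertible
  rw [Matrix.isUnit_iff_isUnit_det] at hD₀u
  have hD₀l : ∀ l, IsUnit (D₀.map (Pi.evalRingHom Λl l)).det := by
    intro l
    have h := (Pi.evalRingHom Λl l).map_det D₀
    rw [RingHom.mapMatrix_apply] at h
    rw [← h]
    exact hD₀u.map (Pi.evalRingHom Λl l)
  -- surjectivity input for the inductive construction
  have hsurj : ∀ l (y : Fin m → Λl l), ∃ w : Fin s → Λl l,
      ∑ c : Fin s, w c • ψ l (Pi.single c 1) = y := by
    intro l y
    set D₀l := D₀.map (Pi.evalRingHom Λl l) with hD₀ldef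
    set p : Fin s → Λl l := fun c => ∑ j, if c = emb j then y j else 0 with hpdef
    set w := Matrix.vecMul p D₀l⁻¹ with hwdef
    have hψsingle : ∀ c : Fin s, ψ l (Pi.single c 1) = fun j => D c j l := by
      intro c; funext j
      rw [hψapp]
      have hterm : ∀ t : Fin s, ι ((Pi.single c 1 : Fin s → E) t) l * D t j l
          = if t = c then D c j l else 0 := by
        intro t
        rcases eq_or_ne t c with rfl | ht
        · simp
        · simp [Pi.single_apply, ht]
      rw [Finset.sum_congr rfl fun t _ => hterm t, Finset.sum_ite_eq']
      simp
    refine ⟨w, ?_⟩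
    funext j
    have h1 : (∑ c : Fin s, w c • ψ l (Pi.single c 1)) j = ∑ c, w c * D c j l := by
      rw [Finset.sum_apply]
      exact Finset.sum_congr rfl fun c _ => by rw [hψsingle c]; rfl
    rw [h1]
    have h2 : Matrix.vecMul w D₀l (emb j) = ∑ c, w c * D c j l := by
      show ∑ c, w c * D₀l c (emb j) = ∑ c, w c * D c j l
      refine Finset.sum_congr rfl fun c _ => ?_
      rw [hD₀ldef, Matrix.map_apply, hD₀emb c j]
      rfl
    have hp : p (emb j) = y j := by
      simp only [hpdef]
      have hterm : ∀ j' : Fin m, (if emb j = emb j' then y j' else 0)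
          = if j' = j then y j else 0 := by
        intro j'
        rcases eq_or_ne j' j with rfl | hne
        · simp
        · have hne' : emb j ≠ emb j' := fun h => hne (hembinj h).symm
          simp [hne', hne]
      rw [Finset.sum_congr rfl fun j' _ => hterm j', Finset.sum_ite_eq']
      simp
    rw [← h2, hwdef, Matrix.vecMul_vecMul, Matrix.nonsing_inv_mul _ (hD₀l l),
      Matrix.vecMul_one]
    exact hp
  -- cardinality
  have hcard' : ((Fintype.card (ZMod d') : ℕ) : Cardinal) < Cardinal.mk E := by
    rwa [ZMod.card]
  -- the good family
  obtain ⟨v, hv⟩ := aux_good_family hcard' ψ hsurj m le_rfl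
  -- E-linear independence of v
  have hιl : ∀ l : ZMod d', Function.Injective fun c : E => ι c l := by
    intro l
    exact RingHom.injective ((Pi.evalRingHom Λl l).comp ι)
  have hvE : LinearIndependent E v := by
    have h1 : LinearIndependent E (fun i => ψ 0 (v i)) := by
      refine (hv 0).restrict_scalars ?_
      intro a b h
      apply hιl 0
      simpa [Algebra.smul_def, halgmap] using h
    exact LinearIndependent.of_comp (ψ 0) h1
  -- complement and basis to build B
  obtain ⟨W', hcompl⟩ := Submodule.exists_isCompl (Submodule.span E (Set.range v))
  have hfr : finrank E W' = s - m := by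
    have h1 := Submodule.finrank_add_eq_of_isCompl hcompl
    have h2 : finrank E (Submodule.span E (Set.range v)) = m := by
      rw [finrank_span_eq_card hvE, Fintype.card_fin]
    have h3 : finrank E (Fin s → E) = s := Module.finrank_fin_fun E
    omega
  let bW : Basis (Fin (s - m)) E W' := finBasisOfFinrankEq E W' hfr
  set g : Fin m ⊕ Fin (s - m) → (Fin s → E) :=
    Sum.elim v (fun i => (bW i : Fin s → E)) with hgdef
  have hspanW : Submodule.span E (Set.range fun i => (bW i : Fin s → E)) = W' := by
    have : (Set.range fun i => (bW i : Fin s → E)) = W'.subtype '' Set.range bW := by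
      rw [← Set.range_comp]; rfl
    rw [this, ← Submodule.map_span, bW.span_eq, Submodule.map_top, Submodule.range_subtype]
  have hg : LinearIndependent E g := by
    rw [linearIndependent_sum]
    refine ⟨?_, ?_, ?_⟩
    · exact hvE
    · exact (bW.linearIndependent).map' W'.subtype (Submodule.ker_subtype W')
    · have h1 : Set.range (g ∘ Sum.inl) = Set.range v := by rw [hgdef]; rfl
      have h2 : Set.range (g ∘ Sum.inr) = Set.range fun i => (bW i : Fin s → E) := by
        rw [hgdef]; rfl
      rw [h1, h2, hspanW]
      exact hcompl.disjoint
  have hsm' : m + (s - m) = s := by omega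
  set e : Fin m ⊕ Fin (s - m) ≃ Fin s := finSumFinEquiv.trans (finCongr hsm') with hedef
  set B : Matrix (Fin s) (Fin s) E := fun r _c => g (e.symm r) _c with hBdef
  have hBrow : ∀ i : Fin m, B (Fin.castLE hms i) = v i := by
    intro i
    have he : e (Sum.inl i) = Fin.castLE hms i := by
      apply Fin.ext
      simp [hedef]
    have hsymm : e.symm (Fin.castLE hms i) = Sum.inl i := by
      rw [← he, Equiv.symm_apply_apply]
    funext c
    rw [hBdef]
    show g (e.symm (Fin.castLE hms i)) c = v i c
    rw [hsymm]
    rfl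
  have hBunit : IsUnit B := by
    rw [← Matrix.linearIndependent_rows_iff_isUnit]
    have : (fun r => B r) = g ∘ (fun r => e.symm r) := rfl
    rw [show B.row = fun r => B r from rfl, this]
    exact hg.comp _ e.symm.injective
  -- the matrix M = top m×m block of B·D
  set M : Matrix (Fin m) (Fin m) (∀ l, Λl l) :=
    fun i j => ((B.map ι) * D) (Fin.castLE hms i) j with hMdef
  have hMl : ∀ l (i j : Fin m), M i j l = ψ l (v i) j := by
    intro l i j
    rw [hMdef, hψapp]
    show (∑ t, (B.map ι) (Fin.castLE hms i) t * D t j) l = _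
    rw [Finset.sum_apply]
    exact Finset.sum_congr rfl fun t _ => by
      show (ι (B (Fin.castLE hms i) t) * D t j) l = ι (v i t) l * D t j l
      rw [hBrow i]
      rfl
  have hMunit : IsUnit M.det := by
    apply aux_isUnit_pi
    intro l
    have hdet := (Pi.evalRingHom Λl l).map_det M
    rw [RingHom.mapMatrix_apply] at hdet
    show IsUnit ((Pi.evalRingHom Λl l) M.det)
    rw [hdet, ← Matrix.isUnit_iff_isUnit_det, ← Matrix.linearIndependent_rows_iff_isUnit]
    have : (fun i => (M.map (Pi.evalRingHom Λl l)) i) = fun i => ψ l (v i) := by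
      funext i j
      show M i j l = ψ l (v i) j
      exact hMl l i j
    rw [show (M.map (Pi.evalRingHom Λl l)).row = fun i => (M.map (Pi.evalRingHom Λl l)) i from rfl, this]
    exact hv l
  refine ⟨M⁻¹, ?_, B, hBunit, ?_⟩
  · rw [Matrix.isUnit_nonsing_inv_iff, Matrix.isUnit_iff_isUnit_det]
    exact hMunit
  · intro i j
    have h1 : ((B.map ι) * D * M⁻¹) (Fin.castLE hms i) j = (M * M⁻¹) i j := rfl
    rw [h1, Matrix.mul_nonsing_inv _ hMunit]
    simp [Matrix.one_apply]
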